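/- If α and α' are both budget-feasible multiplier tuples for the bid-discount first-price auction, then their entrywise maximum max(α, α') is also budget-feasible. -/
import Mathlib


open MeasureTheory Set

/-- The box `[0,1]ⁿ` of quantile/parameter profiles. -/
def box (n : ℕ) : Set (Fin n → ℝ) := Set.univ.pi fun _ => Icc (0:ℝ) 1

/-- Winning indicator of buyer `i` in the bid-discount first-price auction:
`Φᵢ(α,q) = 1` iff `αᵢ ṽᵢ(qᵢ) ≥ max(max_{j≠i} αⱼ ṽⱼ(qⱼ), λ)`. -/
noncomputable def Phi (n : ℕ) (v : Fin n → ℝ → ℝ) (lam : ℝ) (i : Fin n)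
    (α q : Fin n → ℝ) : ℝ :=
  if max (⨆ j, if j = i then 0 else α j * v j (q j)) lam ≤ α i * v i (q i) then 1 else 0

/-- Expected payment of buyer `i` under parameter `α`:
`Pᵢ(α) = ∫_{[0,1]ⁿ} ṽᵢ(qᵢ) Φᵢ(α,q) dq`. -/
noncomputable def payment (n : ℕ) (v : Fin n → ℝ → ℝ) (lam : ℝ) (i : Fin n)
    (α : Fin n → ℝ) : ℝ :=
  ∫ q in box n, v i (q i) * Phi n v lam i α q

/-- If `α` and `α'` are both budget-feasible multiplier tuples for the bid-discount
first-price auction, then their entrywise maximum is also budget-feasible. -/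
theorem budget_feasible_max (n : ℕ) (v : Fin n → ℝ → ℝ) (lam : ℝ) (ρ : Fin n → ℝ)
    (hv : ∀ i, MonotoneOn (v i) (Icc (0:ℝ) 1))
    (hvr : ∀ i, ∀ q ∈ Icc (0:ℝ) 1, v i q ∈ Icc (0:ℝ) 1)
    (hlam : 0 < lam) (hρ : ∀ i, 0 < ρ i)
    (α α' : Fin n → ℝ) (hα : α ∈ box n) (hα' : α' ∈ box n)
    (hfeas : ∀ i, payment n v lam i α ≤ ρ i)
    (hfeas' : ∀ i, payment n v lam i α' ≤ ρ i) :
    (fun i => max (α i) (α' i)) ∈ box n ∧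
      ∀ i, payment n v lam i (fun i => max (α i) (α' i)) ≤ ρ i := by
  classical
  -- clamp to [0,1]
  set c : ℝ → ℝ := fun t => max 0 (min t 1) with hc
  have hcmem : ∀ t, c t ∈ Icc (0:ℝ) 1 :=
    fun t => ⟨le_max_left _ _, max_le (by norm_num) (min_le_right _ _)⟩
  have hcmono : Monotone c := fun a b hab => max_le_max le_rfl (min_le_min hab le_rfl)
  set g : Fin n → ℝ → ℝ := fun j t => v j (c t) with hg
  have hgmono : ∀ j, Monotone (g j) := fun j a b hab => hv j (hcmem a) (hcmem b) (hcmono hab)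
  have hgmeas : ∀ j, Measurable (g j) := fun j => (hgmono j).measurable
  have hgeq : ∀ j, ∀ t ∈ Icc (0:ℝ) 1, g j t = v j t := by
    intro j t ht
    have : c t = t := by simp [hc, min_eq_left ht.2, max_eq_right ht.1]
    simp [hg, this]
  have hboxmeas : MeasurableSet (box n) := MeasurableSet.univ_pi fun _ => measurableSet_Icc
  have hboxfin : volume (box n) ≠ ⊤ :=
    (isCompact_univ_pi fun _ : Fin n => isCompact_Icc).measure_lt_top.ne
  -- measurability of the g-version of the integrand
  have hPhiG : ∀ (i : Fin n) (δ : Fin n → ℝ), Measurable (fun q : Fin n → ℝ =>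
      g i (q i) * (if max (⨆ j, if j = i then 0 else δ j * g j (q j)) lam ≤ δ i * g i (q i)
        then (1:ℝ) else 0)) := by
    intro i δ
    haveI : Nonempty (Fin n) := ⟨i⟩
    have hx : Measurable fun q : Fin n → ℝ => δ i * g i (q i) :=
      ((hgmeas i).comp (measurable_pi_apply i)).const_mul _
    have hterm : ∀ j, Measurable fun q : Fin n → ℝ =>
        (if j = i then (0:ℝ) else δ j * g j (q j)) := by
      intro j
      by_cases hj : j = i
      · simp [hj]
      · simpa [hj] using ((hgmeas j).comp (measurable_pi_apply j)).const_mul (δ j)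
    have hcond : MeasurableSet {q : Fin n → ℝ |
        max (⨆ j, if j = i then 0 else δ j * g j (q j)) lam ≤ δ i * g i (q i)} := by
      have hset : {q : Fin n → ℝ |
            max (⨆ j, if j = i then 0 else δ j * g j (q j)) lam ≤ δ i * g i (q i)}
          = {q | lam ≤ δ i * g i (q i)} ∩
            ⋂ j, {q | (if j = i then (0:ℝ) else δ j * g j (q j)) ≤ δ i * g i (q i)} := by
        ext q
        simp only [Set.mem_setOf_eq, Set.mem_inter_iff, Set.mem_iInter, max_le_iff]
        constructor
        · rintro ⟨hs, hl⟩
          exact ⟨hl, fun j => le_trans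
            (le_ciSup (f := fun j => if j = i then (0:ℝ) else δ j * g j (q j))
              (Set.finite_range _).bddAbove j) hs⟩
        · rintro ⟨hl, hj⟩
          exact ⟨ciSup_le hj, hl⟩
      rw [hset]
      exact (measurableSet_le measurable_const hx).inter
        (MeasurableSet.iInter fun j => measurableSet_le (hterm j) hx)
    exact ((hgmeas i).comp (measurable_pi_apply i)).mul
      (Measurable.ite hcond measurable_const measurable_const)
  -- on the box, the g-version equals the v-version
  have hGeqF : ∀ (i : Fin n) (δ : Fin n → ℝ), ∀ q ∈ box n,
      g i (q i) * (if max (⨆ j, if j = i then 0 else δ j * g j (q j)) lam ≤ δ i * g i (q i)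
        then (1:ℝ) else 0) = v i (q i) * Phi n v lam i δ q := by
    intro i δ q hq
    have hmem : ∀ j, q j ∈ Icc (0:ℝ) 1 := fun j => hq j (Set.mem_univ j)
    have hterm : ∀ j, (if j = i then (0:ℝ) else δ j * g j (q j))
        = (if j = i then (0:ℝ) else δ j * v j (q j)) := by
      intro j; by_cases hj : j = i <;> simp [hj, hgeq j (q j) (hmem j)]
    simp only [Phi, hgeq i (q i) (hmem i)]
    congr 1
    simp only [funext hterm]
  -- integrability of the integrand on the box, for any multiplier tuple
  have hint : ∀ (i : Fin n) (δ : Fin n → ℝ),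
      IntegrableOn (fun q => v i (q i) * Phi n v lam i δ q) (box n) := by
    intro i δ
    have hae : (fun q : Fin n → ℝ =>
        g i (q i) * (if max (⨆ j, if j = i then 0 else δ j * g j (q j)) lam ≤ δ i * g i (q i)
          then (1:ℝ) else 0)) =ᵐ[volume.restrict (box n)]
        (fun q => v i (q i) * Phi n v lam i δ q) :=
      Filter.eventuallyEq_of_mem (self_mem_ae_restrict hboxmeas) (hGeqF i δ)
    refine ⟨(((hPhiG i δ).aestronglyMeasurable).restrict).congr hae,
      HasFiniteIntegral.restrict_of_bounded (C := 1) (lt_top_iff_ne_top.2 hboxfin) ?_⟩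
    refine Filter.eventually_of_mem (self_mem_ae_restrict hboxmeas) ?_
    intro q hq
    have hvq := hvr i (q i) (hq i (Set.mem_univ i))
    have hPhi : Phi n v lam i δ q = 0 ∨ Phi n v lam i δ q = 1 := by
      unfold Phi; split_ifs <;> simp
    rcases hPhi with h | h
    · simp [Real.norm_eq_abs, h]
    · rw [h, mul_one, Real.norm_eq_abs, abs_of_nonneg hvq.1]; exact hvq.2
  -- key monotonicity step
  have key : ∀ (i : Fin n) (γ : Fin n → ℝ), (∀ j, γ j ≤ max (α j) (α' j)) →
      (max (α i) (α' i) = γ i) →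
      payment n v lam i (fun j => max (α j) (α' j)) ≤ payment n v lam i γ := by
    intro i γ hle hi
    haveI : Nonempty (Fin n) := ⟨i⟩
    unfold payment
    refine setIntegral_mono_on (hint i _) (hint i γ) hboxmeas ?_
    intro q hq
    have hmem : ∀ j, q j ∈ Icc (0:ℝ) 1 := fun j => hq j (Set.mem_univ j)
    have hv0 : 0 ≤ v i (q i) := (hvr i _ (hmem i)).1
    refine mul_le_mul_of_nonneg_left ?_ hv0
    unfold Phi
    split_ifs with h1 h2
    · exact le_refl 1
    · exfalso
      apply h2
      calc max (⨆ j, if j = i then 0 else γ j * v j (q j)) lam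
          ≤ max (⨆ j, if j = i then 0 else max (α j) (α' j) * v j (q j)) lam := by
            refine max_le_max ?_ le_rfl
            refine ciSup_mono (Set.finite_range _).bddAbove ?_
            intro j
            by_cases hj : j = i
            · simp [hj]
            · simp only [hj, if_false]
              exact mul_le_mul_of_nonneg_right (hle j) (hvr j _ (hmem j)).1
        _ ≤ max (α i) (α' i) * v i (q i) := h1
        _ = γ i * v i (q i) := by rw [hi]
    · norm_num
    · exact le_refl 0
  constructor
  · intro i _
    exact ⟨le_trans (hα i (Set.mem_univ i)).1 (le_max_left _ _),
      max_le (hα i (Set.mem_univ i)).2 (hα' i (Set.mem_univ i)).2⟩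
  · intro i
    rcases max_choice (α i) (α' i) with h | h
    · exact le_trans (key i α (fun j => le_max_left _ _) h) (hfeas i)
    · exact le_trans (key i α' (fun j => le_max_right _ _) h) (hfeas' i)
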